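/- Let R_{ijkl} (i,j,k,l ∈ {1,2,3}) be real numbers. If there exists a real symmetric 3×3 matrix (α_{ij}) with R_{ijkl} = α_{ik}α_{jl} − α_{il}α_{jk} for all indices, then the determinant of the 3×3 matrix [[R_{1212}, R_{1213}, R_{1223}], [R_{1213}, R_{1313}, R_{1323}], [R_{1223}, R_{1323}, R_{2323}]] is nonnegative. -/
import Mathlib


open Matrix

theorem weiss_thomas_obstruction (R : Fin 3 → Fin 3 → Fin 3 → Fin 3 → ℝ)
    (h : ∃ A : Matrix (Fin 3) (Fin 3) ℝ, A.IsSymm ∧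
      ∀ i j k l, R i j k l = A i k * A j l - A i l * A j k) :
    0 ≤ Matrix.det !![R 0 1 0 1, R 0 1 0 2, R 0 1 1 2;
                      R 0 1 0 2, R 0 2 0 2, R 0 2 1 2;
                      R 0 1 1 2, R 0 2 1 2, R 1 2 1 2] := by
  obtain ⟨A, hs, hR⟩ := h
  have h10 : A 1 0 = A 0 1 := hs.apply 0 1
  have h20 : A 2 0 = A 0 2 := hs.apply 0 2
  have h21 : A 2 1 = A 1 2 := hs.apply 1 2
  have key : Matrix.det !![R 0 1 0 1, R 0 1 0 2, R 0 1 1 2;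
                      R 0 1 0 2, R 0 2 0 2, R 0 2 1 2;
                      R 0 1 1 2, R 0 2 1 2, R 1 2 1 2] = (A.det) ^ 2 := by
    simp [Matrix.det_fin_three, hR]
    rw [h10, h20, h21]
    ring
  rw [key]
  positivity
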